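/- arXiv:2211.01248 — 2 statements merged into one kernel-verified Lean document; each statement's English description precedes it below -/
import Mathlib

section
/- Equivalence of partial Fourier constraints (Lemma 4.2): let p be a function from the subspaces of F^n to ℝ and define a : (F^n)^ℓ → ℝ by a(x) := ∑_{T : Span(x) ≤ T} p(T). Then the following are equivalent: (i) for every subset I ⊆ Fin ℓ and every α ∈ (F^n)^ℓ, the complex number ∑_{x ∈ (F^n)^ℓ} a(x)·θ^I_α(x) is a nonnegative real; (ii) for all subspaces T ≤ U of F^n and every natural number r with n − dim U ≤ r ≤ ℓ and dim T ≤ ℓ − r, one has ∑_{S : T ≤ S ≤ U} |S|^r · p(S) ≥ 0. -/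
open Classical

set_option linter.unusedSectionVars false
set_option maxHeartbeats 1000000

section PFCAux

variable {n ℓ : ℕ} {F : Type} [Field F] [Fintype F]

/-- The standard dot-product bilinear form on `Fin n → F`. -/
noncomputable def dotB (F : Type) [Field F] (n : ℕ) : LinearMap.BilinForm F (Fin n → F) :=
  LinearMap.mk₂ F (fun u v => ∑ k, u k * v k)
    (fun m₁ m₂ v => by simp [add_mul, Finset.sum_add_distrib])
    (fun c m v => by simp [Finset.mul_sum, mul_assoc])
    (fun m v₁ v₂ => by simp [mul_add, Finset.sum_add_distrib])
    (fun c m v => by simp [Finset.mul_sum]; exact Finset.sum_congr rfl fun k _ => by ring)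

lemma dotB_apply (u v : Fin n → F) : dotB F n u v = ∑ k, u k * v k := rfl

lemma dotB_comm (u v : Fin n → F) : dotB F n u v = dotB F n v u := by
  simp only [dotB_apply]; exact Finset.sum_congr rfl fun k _ => mul_comm _ _

lemma dotB_isRefl : (dotB F n).IsRefl := fun u v h => by rwa [dotB_comm] at h

lemma dotB_nondeg : (dotB F n).Nondegenerate := by
  refine (LinearMap.IsRefl.nondegenerate_iff_separatingLeft (B := dotB F n) (fun u v h => by rwa [dotB_comm] at h)).mpr ?_
  intro m h
  funext k
  have := h (Pi.single k 1)
  simpa [dotB_apply, Pi.single_apply, mul_ite, Finset.sum_ite_eq'] using this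

lemma charSum (ψ : AddChar F ℂ) (hψ : ψ ≠ 1) (S : Submodule F (Fin n → F)) (α : Fin n → F) :
    (∑ v : S, ψ (∑ k, α k * (v : Fin n → F) k)) =
      if ∀ t ∈ S, (∑ k, α k * t k) = 0 then (Fintype.card S : ℂ) else 0 := by
  set f : S →ₗ[F] F :=
    { toFun := fun v => ∑ k, α k * (v : Fin n → F) k
      map_add' := fun u v => by simp [mul_add, Finset.sum_add_distrib]
      map_smul' := fun c v => by
        simp [Finset.mul_sum]
        exact Finset.sum_congr rfl fun k _ => by ring } with hf
  have key : ∀ v : S, ψ (∑ k, α k * (v : Fin n → F) k) = ψ.compAddMonoidHom f.toAddMonoidHom v :=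
    fun v => rfl
  simp_rw [key]
  split_ifs with h
  · have h1 : ψ.compAddMonoidHom f.toAddMonoidHom = 1 := by
      apply AddChar.ext
      intro v
      have : f v = 0 := h v v.2
      simp [AddChar.compAddMonoidHom_apply, LinearMap.toAddMonoidHom_coe, this]
    rw [h1]
    simp
  · push_neg at h
    obtain ⟨t, ht, ht0⟩ := h
    have hft : f ⟨t, ht⟩ ≠ 0 := ht0
    have hne : ψ.compAddMonoidHom f.toAddMonoidHom ≠ 1 := by
      intro hcon
      apply hψ
      apply AddChar.ext
      intro c
      have h2 : f ((c / f ⟨t, ht⟩) • (⟨t, ht⟩ : S)) = c := by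
        rw [map_smul, smul_eq_mul, div_mul_cancel₀ _ hft]
      have h3 := AddChar.ext_iff.mp hcon ((c / f ⟨t, ht⟩) • (⟨t, ht⟩ : S))
      rw [AddChar.compAddMonoidHom_apply, LinearMap.toAddMonoidHom_coe, h2] at h3
      simpa using h3
    exact AddChar.sum_eq_zero_of_ne_one hne

lemma exists_span_eq (S : Submodule F (Fin n → F)) (m : ℕ)
    (h : Module.finrank F S ≤ m) :
    ∃ g : Fin m → (Fin n → F), Submodule.span F (Set.range g) = S := by
  have : FiniteDimensional F S := FiniteDimensional.finiteDimensional_submodule S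
  set b := Module.finBasis F S with hb
  refine ⟨fun i => if h' : (i : ℕ) < Module.finrank F S then (b ⟨i, h'⟩ : Fin n → F) else 0, ?_⟩
  apply le_antisymm
  · rw [Submodule.span_le, Set.range_subset_iff]
    intro i
    split_ifs with h'
    · exact (b ⟨i, h'⟩).2
    · exact S.zero_mem
  · intro x hx
    have hmem : (⟨x, hx⟩ : S) ∈ Submodule.span F (Set.range b) := by
      rw [b.span_eq]; trivial
    have : x ∈ Submodule.map S.subtype (Submodule.span F (Set.range b)) :=
      ⟨⟨x, hx⟩, hmem, rfl⟩
    rw [Submodule.map_span] at this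
    refine Submodule.span_mono ?_ this
    rintro _ ⟨_, ⟨j, rfl⟩, rfl⟩
    refine ⟨⟨(j : ℕ), lt_of_lt_of_le j.2 h⟩, ?_⟩
    simp [j.2]

lemma pfc_inner_sum (ψ : AddChar F ℂ) (hψ : ψ ≠ 1) (S : Submodule F (Fin n → F))
    (I : Finset (Fin ℓ)) (α : Fin ℓ → Fin n → F) :
    (∑ x : Fin ℓ → Fin n → F,
      (if Submodule.span F (Set.range x) ≤ S then (1 : ℂ) else 0) *
        ((∏ i ∈ I, ψ (∑ k, α i k * x i k)) * ∏ i ∈ Iᶜ, if x i = α i then (1 : ℂ) else 0))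
    = if ((∀ i ∈ Iᶜ, α i ∈ S) ∧ ∀ i ∈ I, ∀ t ∈ S, (∑ k, α i k * t k) = 0)
      then (Fintype.card S : ℂ) ^ I.card else 0 := by
  set g : Fin ℓ → (Fin n → F) → ℂ := fun i v =>
    (if v ∈ S then (1 : ℂ) else 0) *
      (if i ∈ I then ψ (∑ k, α i k * v k) else if v = α i then (1 : ℂ) else 0) with hg
  have step1 : ∀ x : Fin ℓ → Fin n → F,
      (if Submodule.span F (Set.range x) ≤ S then (1 : ℂ) else 0) *
        ((∏ i ∈ I, ψ (∑ k, α i k * x i k)) * ∏ i ∈ Iᶜ, if x i = α i then (1 : ℂ) else 0)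
      = ∏ i, g i (x i) := by
    intro x
    have h1 : (Submodule.span F (Set.range x) ≤ S) ↔ ∀ i, x i ∈ S := by
      rw [Submodule.span_le, Set.range_subset_iff]; rfl
    have h2 : (if Submodule.span F (Set.range x) ≤ S then (1 : ℂ) else 0)
        = ∏ i, if x i ∈ S then (1 : ℂ) else 0 := by
      rw [Finset.prod_boole, h1]
      simp
    have h3 : ∏ i, (if i ∈ I then ψ (∑ k, α i k * x i k) else if x i = α i then (1 : ℂ) else 0)
        = (∏ i ∈ I, ψ (∑ k, α i k * x i k)) * ∏ i ∈ Iᶜ, if x i = α i then (1 : ℂ) else 0 := by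
      rw [← Finset.prod_mul_prod_compl I]
      congr 1
      · exact Finset.prod_congr rfl fun i hi => if_pos hi
      · exact Finset.prod_congr rfl fun i hi => if_neg (Finset.mem_compl.mp hi)
    rw [h2, ← h3, hg, ← Finset.prod_mul_distrib]
  simp_rw [step1]
  rw [← Fintype.prod_sum g]
  have hsumI : ∀ i ∈ I, (∑ v : Fin n → F, g i v)
      = if (∀ t ∈ S, (∑ k, α i k * t k) = 0) then (Fintype.card S : ℂ) else 0 := by
    intro i hi
    rw [hg]
    simp only [if_pos hi]
    have : ∀ v : Fin n → F,
        (if v ∈ S then (1 : ℂ) else 0) * ψ (∑ k, α i k * v k)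
        = if v ∈ S then ψ (∑ k, α i k * v k) else 0 := by
      intro v; split_ifs <;> simp
    simp_rw [this]
    rw [← Finset.sum_filter, Finset.sum_subtype _ (by simp : ∀ v : Fin n → F, v ∈ Finset.univ.filter (· ∈ S) ↔ v ∈ S)]
    exact charSum ψ hψ S (α i)
  have hsumIc : ∀ i ∈ Iᶜ, (∑ v : Fin n → F, g i v) = if α i ∈ S then (1 : ℂ) else 0 := by
    intro i hi
    rw [hg]
    simp only [if_neg (Finset.mem_compl.mp hi)]
    simp [mul_ite, mul_one, mul_zero, Finset.sum_ite_eq']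
  rw [← Finset.prod_mul_prod_compl I]
  rw [Finset.prod_congr rfl hsumI, Finset.prod_congr rfl hsumIc]
  have hA : (∏ i ∈ I, if (∀ t ∈ S, (∑ k, α i k * t k) = 0) then (Fintype.card S : ℂ) else 0)
      = if (∀ i ∈ I, ∀ t ∈ S, (∑ k, α i k * t k) = 0) then (Fintype.card S : ℂ) ^ I.card else 0 := by
    by_cases hP : ∀ i ∈ I, ∀ t ∈ S, (∑ k, α i k * t k) = 0
    · rw [if_pos hP, Finset.prod_congr rfl (fun i hi => if_pos (hP i hi)), Finset.prod_const]
    · rw [if_neg hP]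
      push_neg at hP
      obtain ⟨i, hi, hPi⟩ := hP
      exact Finset.prod_eq_zero hi (if_neg (by push_neg; exact hPi))
  have hB : (∏ i ∈ Iᶜ, if α i ∈ S then (1 : ℂ) else 0)
      = if (∀ i ∈ Iᶜ, α i ∈ S) then (1 : ℂ) else 0 := by
    rw [Finset.prod_boole]; congr 1
  rw [hA, hB]
  by_cases hPC : ∀ i ∈ Iᶜ, α i ∈ S
  · by_cases hPI : ∀ i ∈ I, ∀ t ∈ S, (∑ k, α i k * t k) = 0
    · rw [if_pos hPI, if_pos hPC, if_pos ⟨hPC, hPI⟩, mul_one]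
    · rw [if_neg hPI, zero_mul, if_neg (fun hc => hPI hc.2)]
  · rw [if_neg hPC, mul_zero, if_neg (fun hc => hPC hc.1)]

lemma pfc_key (ψ : AddChar F ℂ) (hψ : ψ ≠ 1)
    (p : Submodule F (Fin n → F) → ℝ)
    (a : (Fin ℓ → Fin n → F) → ℝ)
    (ha : ∀ x : Fin ℓ → Fin n → F,
      a x = ∑ T : Submodule F (Fin n → F),
        if Submodule.span F (Set.range x) ≤ T then p T else 0)
    (I : Finset (Fin ℓ)) (α : Fin ℓ → Fin n → F) :
    (∑ x : Fin ℓ → Fin n → F, (a x : ℂ) *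
        ((∏ i ∈ I, ψ (∑ k, α i k * x i k)) *
          ∏ i ∈ Iᶜ, if x i = α i then (1 : ℂ) else 0))
    = ((∑ S : Submodule F (Fin n → F),
        if ((∀ i ∈ Iᶜ, α i ∈ S) ∧ ∀ i ∈ I, ∀ t ∈ S, (∑ k, α i k * t k) = 0)
        then (Fintype.card S : ℝ) ^ I.card * p S else 0 : ℝ) : ℂ) := by
  have step1 : ∀ x : Fin ℓ → Fin n → F, (a x : ℂ) *
      ((∏ i ∈ I, ψ (∑ k, α i k * x i k)) * ∏ i ∈ Iᶜ, if x i = α i then (1 : ℂ) else 0)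
      = ∑ S : Submodule F (Fin n → F), (p S : ℂ) *
        ((if Submodule.span F (Set.range x) ≤ S then (1 : ℂ) else 0) *
          ((∏ i ∈ I, ψ (∑ k, α i k * x i k)) * ∏ i ∈ Iᶜ, if x i = α i then (1 : ℂ) else 0)) := by
    intro x
    rw [ha x]
    push_cast
    rw [Finset.sum_mul]
    refine Finset.sum_congr rfl fun S _ => ?_
    split_ifs <;> push_cast <;> ring
  simp_rw [step1]
  rw [Finset.sum_comm]
  push_cast
  refine Finset.sum_congr rfl fun S _ => ?_
  rw [← Finset.mul_sum, pfc_inner_sum ψ hψ S I α]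
  split_ifs <;> push_cast <;> ring

end PFCAux

/-- **Equivalence of partial Fourier constraints (Lemma 4.2).**
With `a x := ∑_{T ≥ Span x} p T`, the following are equivalent:
(i) for every `I ⊆ Fin ℓ` and `α ∈ (F^n)^ℓ`, `∑_x a(x) θ^I_α(x)` is a
nonnegative real; (ii) for all subspaces `T ≤ U` and every `r` with
`n − dim U ≤ r ≤ ℓ` and `dim T ≤ ℓ − r`, `∑_{T ≤ S ≤ U} |S|^r p S ≥ 0`. -/
theorem partial_fourier_constraints_equivalence
    (n ℓ : ℕ) (hn : 1 ≤ n) (hl : 1 ≤ ℓ) (F : Type) [Field F] [Fintype F]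
    (ψ : AddChar F ℂ) (hψ : ψ ≠ 1)
    (p : Submodule F (Fin n → F) → ℝ)
    (a : (Fin ℓ → Fin n → F) → ℝ)
    (ha : ∀ x : Fin ℓ → Fin n → F,
      a x = ∑ T : Submodule F (Fin n → F),
        if Submodule.span F (Set.range x) ≤ T then p T else 0) :
    (∀ I : Finset (Fin ℓ), ∀ α : Fin ℓ → Fin n → F, ∃ c : ℝ, 0 ≤ c ∧
        (∑ x : Fin ℓ → Fin n → F, (a x : ℂ) *
          ((∏ i ∈ I, ψ (∑ k, α i k * x i k)) *
            ∏ i ∈ Iᶜ, if x i = α i then (1 : ℂ) else 0)) = (c : ℂ))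
      ↔
    (∀ T U : Submodule F (Fin n → F), T ≤ U → ∀ r : ℕ,
        n - Module.finrank F U ≤ r → r ≤ ℓ → Module.finrank F T ≤ ℓ - r →
        0 ≤ ∑ S : Submodule F (Fin n → F),
          if T ≤ S ∧ S ≤ U then (Fintype.card S : ℝ) ^ r * p S else 0) := by
  have hrefl : (dotB F n).IsRefl := dotB_isRefl
  have hnd : (dotB F n).Nondegenerate := dotB_nondeg
  have hfr : Module.finrank F (Fin n → F) = n := Module.finrank_fin_fun F
  constructor
  · -- (i) → (ii)
    intro h T U hTU r hr1 hr2 hr3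
    set W := (dotB F n).orthogonal U with hW
    have hWrank : Module.finrank F W = n - Module.finrank F U := by
      rw [hW, LinearMap.BilinForm.finrank_orthogonal hnd U, hfr]
    obtain ⟨gW, hgW⟩ := exists_span_eq W r (by rw [hWrank]; exact hr1)
    obtain ⟨gT, hgT⟩ := exists_span_eq T (ℓ - r) hr3
    set I : Finset (Fin ℓ) := Finset.univ.filter (fun i => (i : ℕ) < r) with hI
    have hIcard : I.card = r := by
      rw [hI]
      rw [show Finset.univ.filter (fun i : Fin ℓ => (i : ℕ) < r)
          = Finset.map ⟨Fin.castLE hr2, Fin.castLE_injective hr2⟩ Finset.univ by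
        ext i
        simp only [Finset.mem_filter, Finset.mem_univ, true_and, Finset.mem_map,
          Function.Embedding.coeFn_mk]
        constructor
        · intro hi; exact ⟨⟨(i : ℕ), hi⟩, by ext; simp⟩
        · rintro ⟨j, rfl⟩; exact j.2]
      simp
    set α : Fin ℓ → Fin n → F := fun i =>
      if h' : (i : ℕ) < r then gW ⟨i, h'⟩ else gT ⟨(i : ℕ) - r, by omega⟩ with hα
    have claim1 : ∀ S : Submodule F (Fin n → F), (∀ i ∈ Iᶜ, α i ∈ S) ↔ T ≤ S := by
      intro S
      constructor
      · intro hα'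
        rw [← hgT, Submodule.span_le, Set.range_subset_iff]
        intro j
        have hj : (j : ℕ) < ℓ - r := j.2
        have hiIc : (⟨r + (j : ℕ), by omega⟩ : Fin ℓ) ∈ Iᶜ := by
          simp only [hI, Finset.mem_compl, Finset.mem_filter, Finset.mem_univ, true_and]
          simp only [not_lt]
          exact Nat.le_add_right r j
        have hval : α (⟨r + (j : ℕ), by omega⟩ : Fin ℓ) = gT j := by
          simp only [hα]
          rw [dif_neg (show ¬ r + (j : ℕ) < r by omega)]
          exact congrArg gT (Fin.ext (show r + (j : ℕ) - r = (j : ℕ) by omega))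
        rw [← hval]
        exact hα' _ hiIc
      · intro hTS i hi
        have hir : ¬ ((i : ℕ) < r) := by
          simpa [hI, Finset.mem_compl, Finset.mem_filter] using hi
        have : α i ∈ T := by
          rw [hα]
          simp only
          rw [dif_neg hir, ← hgT]
          exact Submodule.subset_span ⟨_, rfl⟩
        exact hTS this
    have hUW : (dotB F n).orthogonal W = U := by
      rw [hW, LinearMap.BilinForm.orthogonal_orthogonal hnd hrefl]
    have claim2 : ∀ S : Submodule F (Fin n → F),
        (∀ i ∈ I, ∀ t ∈ S, (∑ k, α i k * t k) = 0) ↔ S ≤ U := by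
      intro S
      constructor
      · intro hcond t ht
        rw [← hUW]
        intro w hw
        have hker : W ≤ LinearMap.ker ((dotB F n).flip t) := by
          rw [← hgW, Submodule.span_le, Set.range_subset_iff]
          intro j
          have hj : (j : ℕ) < r := j.2
          have hiI : (⟨(j : ℕ), by omega⟩ : Fin ℓ) ∈ I := by
            simp only [hI, Finset.mem_filter, Finset.mem_univ, true_and]
            exact hj
          have hval : α (⟨(j : ℕ), by omega⟩ : Fin ℓ) = gW j := by
            simp only [hα]
            rw [dif_pos (show ((j : ℕ) : ℕ) < r from hj)]
          rw [SetLike.mem_coe, LinearMap.mem_ker]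
          show dotB F n (gW j) t = 0
          rw [← hval]
          exact hcond _ hiI t ht
        exact LinearMap.mem_ker.mp (hker hw)
      · intro hSU i hi t ht
        have hir : (i : ℕ) < r := by
          simpa [hI, Finset.mem_filter] using hi
        have hαW : α i ∈ W := by
          rw [hα]
          simp only
          rw [dif_pos hir, ← hgW]
          exact Submodule.subset_span ⟨_, rfl⟩
        exact hrefl t (α i) (hαW t (hSU ht))
    obtain ⟨c, hc0, hc⟩ := h I α
    rw [pfc_key ψ hψ p a ha I α] at hc
    have hre : (∑ S : Submodule F (Fin n → F),
        if ((∀ i ∈ Iᶜ, α i ∈ S) ∧ ∀ i ∈ I, ∀ t ∈ S, (∑ k, α i k * t k) = 0)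
        then (Fintype.card S : ℝ) ^ I.card * p S else 0) = c := Complex.ofReal_inj.mp hc
    have hcongr : (∑ S : Submodule F (Fin n → F),
        if T ≤ S ∧ S ≤ U then (Fintype.card S : ℝ) ^ r * p S else 0)
        = ∑ S : Submodule F (Fin n → F),
          if ((∀ i ∈ Iᶜ, α i ∈ S) ∧ ∀ i ∈ I, ∀ t ∈ S, (∑ k, α i k * t k) = 0)
          then (Fintype.card S : ℝ) ^ I.card * p S else 0 := by
      refine Finset.sum_congr rfl fun S _ => ?_
      rw [hIcard]
      exact if_congr (and_congr (claim1 S).symm (claim2 S).symm) rfl rfl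
    rw [hcongr, hre]
    exact hc0
  · -- (ii) → (i)
    intro h I α
    refine ⟨∑ S : Submodule F (Fin n → F),
        if ((∀ i ∈ Iᶜ, α i ∈ S) ∧ ∀ i ∈ I, ∀ t ∈ S, (∑ k, α i k * t k) = 0)
        then (Fintype.card S : ℝ) ^ I.card * p S else 0, ?_, pfc_key ψ hψ p a ha I α⟩
    set T := Submodule.span F (α '' ↑Iᶜ) with hT
    set W := Submodule.span F (α '' ↑I) with hWd
    set U := (dotB F n).orthogonal W with hU
    have claim1 : ∀ S : Submodule F (Fin n → F), (∀ i ∈ Iᶜ, α i ∈ S) ↔ T ≤ S := by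
      intro S
      rw [hT, Submodule.span_le, Set.image_subset_iff]
      constructor
      · intro h' i hi
        exact h' i (by simpa using hi)
      · intro h' i hi
        exact h' (by simpa using hi)
    have claim2 : ∀ S : Submodule F (Fin n → F),
        (∀ i ∈ I, ∀ t ∈ S, (∑ k, α i k * t k) = 0) ↔ S ≤ U := by
      intro S
      constructor
      · intro hcond t ht
        rw [hU]
        intro w hw
        have hker : W ≤ LinearMap.ker ((dotB F n).flip t) := by
          rw [hWd, Submodule.span_le, Set.image_subset_iff]
          intro i hi
          rw [Set.mem_preimage, SetLike.mem_coe, LinearMap.mem_ker]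
          show dotB F n (α i) t = 0
          exact hcond i (by simpa using hi) t ht
        exact LinearMap.mem_ker.mp (hker hw)
      · intro hSU i hi t ht
        have hαW : α i ∈ W := by
          rw [hWd]
          exact Submodule.subset_span ⟨i, by simpa using hi, rfl⟩
        exact hSU ht (α i) hαW
    have hrw : (∑ S : Submodule F (Fin n → F),
        if ((∀ i ∈ Iᶜ, α i ∈ S) ∧ ∀ i ∈ I, ∀ t ∈ S, (∑ k, α i k * t k) = 0)
        then (Fintype.card S : ℝ) ^ I.card * p S else 0)
        = ∑ S : Submodule F (Fin n → F),
          if T ≤ S ∧ S ≤ U then (Fintype.card S : ℝ) ^ I.card * p S else 0 := by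
      refine Finset.sum_congr rfl fun S _ => ?_
      exact if_congr (and_congr (claim1 S) (claim2 S)) rfl rfl
    rw [hrw]
    by_cases hTU : T ≤ U
    · have hWr : Module.finrank F W ≤ I.card := by
        have h1 : α '' ↑I = ↑(I.image α) := by simp
        rw [hWd, h1]
        exact le_trans (finrank_span_finset_le_card (I.image α)) (Finset.card_image_le)
      have hb1 : n - Module.finrank F U ≤ I.card := by
        have h2 : Module.finrank F U = n - Module.finrank F W := by
          rw [hU, LinearMap.BilinForm.finrank_orthogonal hnd W, hfr]
        have h3 : Module.finrank F W ≤ n :=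
          le_trans (Submodule.finrank_le W) (le_of_eq hfr)
        omega
      have hb2 : I.card ≤ ℓ := by
        have := Finset.card_le_univ I
        simpa using this
      have hb3 : Module.finrank F T ≤ ℓ - I.card := by
        have h1 : α '' ↑Iᶜ = ↑(Iᶜ.image α) := by simp
        have h2 : Module.finrank F T ≤ Iᶜ.card := by
          rw [hT, h1]
          exact le_trans (finrank_span_finset_le_card (Iᶜ.image α)) (Finset.card_image_le)
        have h3 : Iᶜ.card = ℓ - I.card := by
          rw [Finset.card_compl]; simp
        omega
      exact h T U hTU I.card hb1 hb2 hb3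
    · refine le_of_eq (Finset.sum_eq_zero fun S _ => ?_).symm
      exact if_neg (fun hc => hTU (le_trans hc.1 hc.2))
end

section
/- Exact completeness of the partial Krawtchouk hierarchy at level n (Theorem 1.3, pseudoprobability form): assume ℓ ≥ n. Then q^k₀ is the greatest element of the set {∑_S |S| · p(S) : p feasible for the distance-constrained pseudoprobability program at level ℓ}; that is, every feasible p satisfies ∑_S |S| · p(S) ≤ q^k₀, and some feasible p attains this value (so the optimum value equals A_q^Lin(n,d) = q^k₀). -/
open Classical

noncomputable section

/-- A subspace `C ≤ F^n` has minimum distance at least `d` if every nonzero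
codeword has Hamming weight at least `d`. -/
def MinDistGe (n d : ℕ) (F : Type) [Field F] [Fintype F]
    (C : Submodule F (Fin n → F)) : Prop :=
  ∀ w ∈ C, w ≠ 0 → d ≤ hammingNorm w

/-- `k₀`: the maximum dimension of a subspace of `F^n` of minimum distance at
least `d`. -/
def kzero (n d : ℕ) (F : Type) [Field F] [Fintype F] : ℕ :=
  sSup {k : ℕ | ∃ C : Submodule F (Fin n → F), MinDistGe n d F C ∧ Module.finrank F C = k}

/-- Feasibility for the distance-constrained pseudoprobability program at level `ℓ`. -/
def PseudoFeasibleDist (n ℓ d : ℕ) (F : Type) [Field F] [Fintype F]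
    (p : Submodule F (Fin n → F) → ℝ) : Prop :=
  (∑ S : Submodule F (Fin n → F), p S) = 1 ∧
  (∀ S : Submodule F (Fin n → F), (∃ w ∈ S, w ≠ 0 ∧ hammingNorm w ≤ d - 1) → p S = 0) ∧
  (∀ U : Submodule F (Fin n → F),
      0 ≤ ∑ S : Submodule F (Fin n → F),
        if S ≤ U then (Fintype.card S : ℝ) ^ ℓ * p S else 0) ∧
  (∀ U : Submodule F (Fin n → F),
      0 ≤ ∑ S : Submodule F (Fin n → F), if U ≤ S then p S else 0)

/-! ### Auxiliary material -/

section Aux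

lemma finrank_comap_mkQ (F M : Type) [Field F] [AddCommGroup M] [Module F M]
    [FiniteDimensional F M] (p : Submodule F M) (W : Submodule F (M ⧸ p)) :
    Module.finrank F (Submodule.comap p.mkQ W) = Module.finrank F W + Module.finrank F p := by
  set U := Submodule.comap p.mkQ W with hU
  have hpU : p ≤ U := by
    intro x hx
    simp [hU, Submodule.mem_comap, (Submodule.Quotient.mk_eq_zero p).mpr hx]
  set f : U →ₗ[F] M ⧸ p := p.mkQ.comp U.subtype with hf
  have hrange : LinearMap.range f = W := by
    rw [hf, LinearMap.range_comp, Submodule.range_subtype, hU]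
    exact Submodule.map_comap_eq_of_surjective (Submodule.mkQ_surjective p) W
  have hker : LinearMap.ker f = Submodule.comap U.subtype p := by
    rw [hf, LinearMap.ker_comp, Submodule.ker_mkQ]
  have h1 := LinearMap.finrank_range_add_finrank_ker f
  rw [hrange, hker,
    (Submodule.comapSubtypeEquivOfLe hpU).finrank_eq] at h1
  exact h1.symm

/-- number of `r`-dimensional subspaces of `F^m` -/
def gdim (F : Type) [Field F] [Fintype F] (m r : ℕ) : ℕ :=
  Nat.card {W : Submodule F (Fin m → F) // Module.finrank F W = r}

lemma gdim_zero (F : Type) [Field F] [Fintype F] (m : ℕ) : gdim F m 0 = 1 := by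
  rw [gdim, Nat.card_eq_one_iff_unique]
  constructor
  · constructor
    intro W W'
    apply Subtype.ext
    rw [Submodule.finrank_eq_zero.mp W.2, Submodule.finrank_eq_zero.mp W'.2]
  · exact ⟨⟨⊥, finrank_bot F _⟩⟩

lemma card_above (F : Type) [Field F] [Fintype F] (n j : ℕ) (S : Submodule F (Fin n → F))
    (hj : Module.finrank F S ≤ j) :
    Nat.card {U : Submodule F (Fin n → F) // S ≤ U ∧ Module.finrank F U = j}
      = gdim F (n - Module.finrank F S) (j - Module.finrank F S) := by
  set k := Module.finrank F S with hk
  have hkn : k ≤ n := by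
    simpa using (Submodule.finrank_le S).trans_eq (Module.finrank_fin_fun F)
  have hquot : Module.finrank F ((Fin n → F) ⧸ S) = n - k := by
    have := Submodule.finrank_quotient_add_finrank S
    rw [Module.finrank_fin_fun] at this
    omega
  obtain ⟨e1⟩ : Nonempty (((Fin n → F) ⧸ S) ≃ₗ[F] (Fin (n - k) → F)) :=
    FiniteDimensional.nonempty_linearEquiv_of_finrank_eq
      (by rw [hquot, Module.finrank_fin_fun])
  have E : {W : Submodule F ((Fin n → F) ⧸ S) // Module.finrank F W = j - k} ≃
      {U : Submodule F (Fin n → F) // S ≤ U ∧ Module.finrank F U = j} :=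
  { toFun := fun W => ⟨Submodule.comap S.mkQ W.1,
      ⟨fun x hx => by
        simp [Submodule.mem_comap, (Submodule.Quotient.mk_eq_zero S).mpr hx],
       by rw [finrank_comap_mkQ, W.2]; omega⟩⟩
    invFun := fun U => ⟨Submodule.map S.mkQ U.1, by
      have h := finrank_comap_mkQ F (Fin n → F) S (Submodule.map S.mkQ U.1)
      rw [Submodule.comap_map_eq, Submodule.ker_mkQ, sup_eq_left.mpr U.2.1, U.2.2] at h
      omega⟩
    left_inv := fun W => Subtype.ext
      (Submodule.map_comap_eq_of_surjective (Submodule.mkQ_surjective S) W.1)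
    right_inv := fun U => Subtype.ext (by
      show Submodule.comap S.mkQ (Submodule.map S.mkQ U.1) = U.1
      rw [Submodule.comap_map_eq, Submodule.ker_mkQ, sup_eq_left.mpr U.2.1]) }
  have E2 : {W : Submodule F ((Fin n → F) ⧸ S) // Module.finrank F W = j - k} ≃
      {W : Submodule F (Fin (n - k) → F) // Module.finrank F W = j - k} :=
    Equiv.subtypeEquiv (Submodule.orderIsoMapComap e1).toEquiv (fun W => by
      rw [show ((Submodule.orderIsoMapComap e1).toEquiv W : Submodule F (Fin (n - k) → F))
        = Submodule.map (e1 : ((Fin n → F) ⧸ S) →ₗ[F] (Fin (n - k) → F)) W from rfl,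
        LinearEquiv.finrank_map_eq])
  rw [gdim]
  exact Nat.card_congr (E.symm.trans E2)

lemma nat_card_ne (α : Type) [Finite α] (a : α) :
    Nat.card {x : α // x ≠ a} = Nat.card α - 1 := by
  classical
  cases nonempty_fintype α
  have e : {x : α // x = a} ⊕ {x : α // ¬ x = a} ≃ α := Equiv.sumCompl (· = a)
  have h1 : Nat.card α = Nat.card {x : α // x = a} + Nat.card {x : α // ¬ x = a} := by
    rw [← Nat.card_congr e, Nat.card_sum]
  have h2 : Nat.card {x : α // x = a} = 1 := by
    rw [Nat.card_eq_one_iff_unique]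
    exact ⟨⟨fun x y => Subtype.ext (x.2.trans y.2.symm)⟩, ⟨⟨a, rfl⟩⟩⟩
  have h3 : Nat.card {x : α // ¬ x = a} = Nat.card {x : α // x ≠ a} := rfl
  omega

lemma nat_card_fun (F : Type) [Fintype F] (k : ℕ) :
    Nat.card (Fin k → F) = Nat.card F ^ k := by
  rw [Nat.card_pi, Finset.prod_const, Finset.card_univ, Fintype.card_fin]

lemma gdim_succ_le (F : Type) [Field F] [Fintype F] (m r : ℕ) :
    gdim F (m + 1) (r + 1) ≤ (Fintype.card F ^ (m + 1) - 1) * gdim F m r := by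
  set V := Fin (m + 1) → F with hV
  have he : ∀ v : {v : V // v ≠ 0},
      Nonempty ((V ⧸ Submodule.span F {v.1}) ≃ₗ[F] (Fin m → F)) := by
    intro v
    apply FiniteDimensional.nonempty_linearEquiv_of_finrank_eq
    have h1 := Submodule.finrank_quotient_add_finrank (Submodule.span F {v.1})
    rw [finrank_span_singleton v.2, Module.finrank_fin_fun] at h1
    rw [Module.finrank_fin_fun]
    omega
  set ev : ∀ v : {v : V // v ≠ 0},
      (V ⧸ Submodule.span F {v.1}) ≃ₗ[F] (Fin m → F) :=
    fun v => (he v).some with hev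
  have hev_inj : ∀ v, Function.Injective ((ev v : (V ⧸ Submodule.span F {v.1}) →ₗ[F] (Fin m → F)))
    := fun v => (ev v).injective
  have hvex : ∀ W : {W : Submodule F V // Module.finrank F W = r + 1},
      ∃ v : V, v ∈ W.1 ∧ v ≠ 0 := by
    intro W
    apply Submodule.exists_mem_ne_zero_of_ne_bot
    intro hbot
    have := W.2
    rw [hbot, finrank_bot] at this
    omega
  choose vf hmem hne using hvex
  set T := ({v : V // v ≠ 0} × {W' : Submodule F (Fin m → F) // Module.finrank F W' = r})
    with hT
  have hrk : ∀ W : {W : Submodule F V // Module.finrank F W = r + 1},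
      Module.finrank F (Submodule.map (ev ⟨vf W, hne W⟩ : (V ⧸ Submodule.span F {vf W}) →ₗ[F] (Fin m → F))
        (Submodule.map (Submodule.span F {vf W}).mkQ W.1)) = r := by
    intro W
    rw [LinearEquiv.finrank_map_eq]
    have h := finrank_comap_mkQ F V (Submodule.span F {vf W})
      (Submodule.map (Submodule.span F {vf W}).mkQ W.1)
    rw [Submodule.comap_map_eq, Submodule.ker_mkQ,
      sup_eq_left.mpr ((Submodule.span_singleton_le_iff_mem _ _).mpr (hmem W)), W.2,
      finrank_span_singleton (hne W)] at h
    exact Nat.succ_injective h.symm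
  set Φ : {W : Submodule F V // Module.finrank F W = r + 1} → T :=
    fun W => ⟨⟨vf W, hne W⟩,
      ⟨Submodule.map (ev ⟨vf W, hne W⟩ : (V ⧸ Submodule.span F {vf W}) →ₗ[F] (Fin m → F))
        (Submodule.map (Submodule.span F {vf W}).mkQ W.1), hrk W⟩⟩ with hΦ
  have hrec : ∀ W : {W : Submodule F V // Module.finrank F W = r + 1},
      Submodule.comap (Submodule.span F {vf W}).mkQ
        (Submodule.comap (ev ⟨vf W, hne W⟩ : (V ⧸ Submodule.span F {vf W}) →ₗ[F] (Fin m → F))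
          (Submodule.map (ev ⟨vf W, hne W⟩ : (V ⧸ Submodule.span F {vf W}) →ₗ[F] (Fin m → F))
            (Submodule.map (Submodule.span F {vf W}).mkQ W.1))) = W.1 := by
    intro W
    rw [Submodule.comap_map_eq_of_injective (hev_inj _), Submodule.comap_map_eq,
      Submodule.ker_mkQ,
      sup_eq_left.mpr ((Submodule.span_singleton_le_iff_mem _ _).mpr (hmem W))]
  have hinj : Function.Injective Φ := by
    intro W₁ W₂ h
    have h2 := congrArg
      (fun s : T => Submodule.comap (Submodule.span F {s.1.1}).mkQ
        (Submodule.comap (ev s.1 : (V ⧸ Submodule.span F {s.1.1}) →ₗ[F] (Fin m → F)) s.2.1)) h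
    simp only [hΦ] at h2
    rw [hrec W₁, hrec W₂] at h2
    exact Subtype.ext h2
  have hcard := Nat.card_le_card_of_injective Φ hinj
  rw [gdim, gdim]
  refine le_trans hcard (le_of_eq ?_)
  rw [hT, Nat.card_prod, nat_card_ne, nat_card_fun, Nat.card_eq_fintype_card]

lemma minDistGe_bot (n d : ℕ) (F : Type) [Field F] [Fintype F] :
    MinDistGe n d F ⊥ :=
  fun w hw hw0 => absurd ((Submodule.mem_bot F).mp hw) hw0

lemma kzero_mem_upper (n d : ℕ) (F : Type) [Field F] [Fintype F] :
    n ∈ upperBounds {k : ℕ | ∃ C : Submodule F (Fin n → F),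
      MinDistGe n d F C ∧ Module.finrank F C = k} := by
  rintro k ⟨C, -, rfl⟩
  simpa using (Submodule.finrank_le C).trans_eq (Module.finrank_fin_fun F)

lemma kzero_le_n (n d : ℕ) (F : Type) [Field F] [Fintype F] : kzero n d F ≤ n :=
  csSup_le ⟨0, ⟨⊥, minDistGe_bot n d F, finrank_bot F _⟩⟩ (kzero_mem_upper n d F)

lemma le_kzero (n d : ℕ) (F : Type) [Field F] [Fintype F] (C : Submodule F (Fin n → F))
    (hC : MinDistGe n d F C) : Module.finrank F C ≤ kzero n d F :=
  le_csSup ⟨n, kzero_mem_upper n d F⟩ ⟨C, hC, rfl⟩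

lemma kzero_attained (n d : ℕ) (F : Type) [Field F] [Fintype F] :
    ∃ C : Submodule F (Fin n → F), MinDistGe n d F C ∧ Module.finrank F C = kzero n d F := by
  have h := Nat.sSup_mem (s := {k : ℕ | ∃ C : Submodule F (Fin n → F),
      MinDistGe n d F C ∧ Module.finrank F C = k})
    ⟨0, ⟨⊥, minDistGe_bot n d F, finrank_bot F _⟩⟩ ⟨n, kzero_mem_upper n d F⟩
  exact h

/-- The dual certificate coefficients, defined by downward recursion. -/
def acoef (n ℓ d : ℕ) (F : Type) [Field F] [Fintype F] : ℕ → ℝ := fun k =>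
  if _h : k < kzero n d F then
    ((Fintype.card F : ℝ) ^ (kzero n d F) - (Fintype.card F : ℝ) ^ k)
        / (Fintype.card F : ℝ) ^ (ℓ * k)
      - ∑ j ∈ (Finset.Ioo k (kzero n d F)).attach,
          (gdim F (n - k) (j.1 - k) : ℝ) * acoef n ℓ d F j.1
  else 0
termination_by k => kzero n d F - k
decreasing_by
  have := Finset.mem_Ioo.mp j.2
  omega

lemma acoef_of_le (n ℓ d : ℕ) (F : Type) [Field F] [Fintype F] (k : ℕ)
    (h : kzero n d F ≤ k) : acoef n ℓ d F k = 0 := by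
  rw [acoef, dif_neg (by omega)]

lemma acoef_sum (n ℓ d : ℕ) (F : Type) [Field F] [Fintype F] (k : ℕ)
    (hk : k ≤ kzero n d F) :
    ∑ j ∈ Finset.Ico k (kzero n d F), (gdim F (n - k) (j - k) : ℝ) * acoef n ℓ d F j
      = ((Fintype.card F : ℝ) ^ (kzero n d F) - (Fintype.card F : ℝ) ^ k)
          / (Fintype.card F : ℝ) ^ (ℓ * k) := by
  rcases eq_or_lt_of_le hk with heq | hlt
  · subst heq
    simp [Finset.Ico_self]
  · have hins : Finset.Ico k (kzero n d F) = insert k (Finset.Ioo k (kzero n d F)) := by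
      ext x
      simp only [Finset.mem_Ico, Finset.mem_Ioo, Finset.mem_insert]
      omega
    rw [hins, Finset.sum_insert (by simp [Finset.mem_Ioo])]
    rw [Nat.sub_self, gdim_zero, Nat.cast_one, one_mul]
    conv_lhs => rw [acoef, dif_pos hlt]
    rw [Finset.sum_attach _ (fun j => (gdim F (n - k) (j - k) : ℝ) * acoef n ℓ d F j)]
    ring

lemma acoef_nonneg (n ℓ d : ℕ) (F : Type) [Field F] [Fintype F] (hnl : n ≤ ℓ) :
    ∀ k, 0 ≤ acoef n ℓ d F k := by
  have hk₀n : kzero n d F ≤ n := kzero_le_n n d F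
  have hQ2 : (2 : ℝ) ≤ (Fintype.card F : ℝ) := by exact_mod_cast Fintype.one_lt_card
  set Q : ℝ := (Fintype.card F : ℝ) with hQdef
  have hQ1 : (1 : ℝ) ≤ Q := by linarith
  have hQ0 : (0 : ℝ) < Q := by linarith
  suffices H : ∀ i k, kzero n d F - k ≤ i → 0 ≤ acoef n ℓ d F k from
    fun k => H (kzero n d F) k (Nat.sub_le _ _)
  intro i
  induction i with
  | zero =>
    intro k hk
    rw [acoef_of_le n ℓ d F k (by omega)]
  | succ i ih =>
    intro k hk
    by_cases hlt : k < kzero n d F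
    swap
    · rw [acoef_of_le n ℓ d F k (by omega)]
    rw [acoef, dif_pos hlt, sub_nonneg]
    rw [Finset.sum_attach _ (fun j => (gdim F (n - k) (j - k) : ℝ) * acoef n ℓ d F j)]
    set k₀ := kzero n d F with hk₀def
    have hstep : ∀ j ∈ Finset.Ioo k k₀,
        (gdim F (n - k) (j - k) : ℝ) * acoef n ℓ d F j
          ≤ (Q ^ (n - k) - 1) * ((gdim F (n - (k + 1)) (j - (k + 1)) : ℝ)
              * acoef n ℓ d F j) := by
      intro j hj
      have hj' := Finset.mem_Ioo.mp hj
      have haj : 0 ≤ acoef n ℓ d F j := ih j (by omega)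
      have hgd : (gdim F (n - k) (j - k))
          ≤ (Fintype.card F ^ (n - k) - 1) * gdim F (n - (k + 1)) (j - (k + 1)) := by
        have h2 := gdim_succ_le F (n - (k + 1)) (j - (k + 1))
        have e1 : n - (k + 1) + 1 = n - k := by omega
        have e2 : j - (k + 1) + 1 = j - k := by omega
        rw [e1, e2] at h2
        exact h2
      have hone : 1 ≤ Fintype.card F ^ (n - k) := Nat.one_le_pow _ _ Fintype.card_pos
      have hcast : ((Fintype.card F ^ (n - k) - 1 : ℕ) : ℝ) = Q ^ (n - k) - 1 := by
        rw [Nat.cast_sub hone]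
        push_cast
        ring
      have hgd' : (gdim F (n - k) (j - k) : ℝ)
          ≤ (Q ^ (n - k) - 1) * (gdim F (n - (k + 1)) (j - (k + 1)) : ℝ) := by
        rw [← hcast, ← Nat.cast_mul]
        exact_mod_cast hgd
      rw [← mul_assoc]
      exact mul_le_mul_of_nonneg_right hgd' haj
    calc ∑ j ∈ Finset.Ioo k k₀, (gdim F (n - k) (j - k) : ℝ) * acoef n ℓ d F j
        ≤ ∑ j ∈ Finset.Ioo k k₀, (Q ^ (n - k) - 1) * ((gdim F (n - (k + 1)) (j - (k + 1)) : ℝ)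
            * acoef n ℓ d F j) := Finset.sum_le_sum hstep
      _ = (Q ^ (n - k) - 1) * ∑ j ∈ Finset.Ioo k k₀,
            (gdim F (n - (k + 1)) (j - (k + 1)) : ℝ) * acoef n ℓ d F j := by
          rw [Finset.mul_sum]
      _ = (Q ^ (n - k) - 1) * ∑ j ∈ Finset.Ico (k + 1) k₀,
            (gdim F (n - (k + 1)) (j - (k + 1)) : ℝ) * acoef n ℓ d F j := by
          have hIoo : Finset.Ioo k k₀ = Finset.Ico (k + 1) k₀ := by
            ext x
            simp only [Finset.mem_Ioo, Finset.mem_Ico]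
            omega
          rw [hIoo]
      _ = (Q ^ (n - k) - 1) * ((Q ^ k₀ - Q ^ (k + 1)) / Q ^ (ℓ * (k + 1))) := by
          rw [acoef_sum n ℓ d F (k + 1) (by omega)]
      _ ≤ (Q ^ k₀ - Q ^ k) / Q ^ (ℓ * k) := by
          rw [mul_div_assoc', div_le_div_iff₀ (by positivity) (by positivity)]
          have h1 : Q ^ (n - k) - 1 ≤ Q ^ ℓ := by
            have := pow_le_pow_right₀ hQ1 (show n - k ≤ ℓ by omega)
            linarith
          have h2 : Q ^ (k + 1) ≤ Q ^ k₀ := pow_le_pow_right₀ hQ1 (by omega)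
          have h3 : Q ^ k ≤ Q ^ (k + 1) := pow_le_pow_right₀ hQ1 (by omega)
          have h0 : (0 : ℝ) ≤ Q ^ (n - k) - 1 := by
            have h00 : Q ^ 0 ≤ Q ^ (n - k) := pow_le_pow_right₀ hQ1 (Nat.zero_le _)
            rw [pow_zero] at h00
            linarith
          have hA : (Q ^ (n - k) - 1) * (Q ^ k₀ - Q ^ (k + 1)) ≤ Q ^ ℓ * (Q ^ k₀ - Q ^ k) :=
            mul_le_mul h1 (by linarith) (by linarith) (by positivity)
          have hB := mul_le_mul_of_nonneg_right hA (le_of_lt (show (0:ℝ) < Q ^ (ℓ * k) by positivity))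
          have hsplit : Q ^ (ℓ * (k + 1)) = Q ^ ℓ * Q ^ (ℓ * k) := by
            rw [← pow_add]
            congr 1
            ring
          calc (Q ^ (n - k) - 1) * (Q ^ k₀ - Q ^ (k + 1)) * Q ^ (ℓ * k)
              ≤ Q ^ ℓ * (Q ^ k₀ - Q ^ k) * Q ^ (ℓ * k) := hB
            _ = (Q ^ k₀ - Q ^ k) * Q ^ (ℓ * (k + 1)) := by rw [hsplit]; ring

lemma sum_ite_card {α : Type} [Fintype α] (P : α → Prop) [DecidablePred P] (c : ℝ) :
    ∑ x : α, (if P x then c else 0) = (Nat.card {x : α // P x}) * c := by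
  classical
  rw [Finset.sum_ite, Finset.sum_const, Finset.sum_const_zero, add_zero, nsmul_eq_mul]
  congr 2
  rw [Nat.card_eq_fintype_card, Fintype.card_subtype]

lemma asum_eq (n ℓ d : ℕ) (F : Type) [Field F] [Fintype F]
    (S : Submodule F (Fin n → F)) (hS : Module.finrank F S ≤ kzero n d F) :
    ∑ U : Submodule F (Fin n → F),
        (if S ≤ U then acoef n ℓ d F (Module.finrank F U) else 0)
      = ((Fintype.card F : ℝ) ^ (kzero n d F)
          - (Fintype.card F : ℝ) ^ (Module.finrank F S))
        / (Fintype.card F : ℝ) ^ (ℓ * Module.finrank F S) := by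
  classical
  set k := Module.finrank F S with hkdef
  have hk₀n : kzero n d F ≤ n := kzero_le_n n d F
  have hrankU : ∀ U : Submodule F (Fin n → F), Module.finrank F U ≤ n := fun U => by
    simpa using (Submodule.finrank_le U).trans_eq (Module.finrank_fin_fun F)
  have step1 : ∀ U : Submodule F (Fin n → F),
      (if S ≤ U then acoef n ℓ d F (Module.finrank F U) else 0)
        = ∑ j ∈ Finset.range (n + 1),
            (if S ≤ U ∧ Module.finrank F U = j then acoef n ℓ d F j else 0) := by
    intro U
    by_cases hSU : S ≤ U
    · simp only [hSU, true_and, if_true]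
      rw [Finset.sum_ite_eq (Finset.range (n + 1)) (Module.finrank F U)
        (fun j => acoef n ℓ d F j), if_pos (Finset.mem_range.mpr (by have := hrankU U; omega))]
    · simp [hSU]
  rw [Finset.sum_congr rfl (fun U _ => step1 U), Finset.sum_comm]
  have step3 : ∀ j, ∑ U : Submodule F (Fin n → F),
      (if S ≤ U ∧ Module.finrank F U = j then acoef n ℓ d F j else 0)
        = (Nat.card {U : Submodule F (Fin n → F) // S ≤ U ∧ Module.finrank F U = j})
            * acoef n ℓ d F j :=
    fun j => sum_ite_card _ _
  rw [Finset.sum_congr rfl (fun j _ => step3 j)]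
  have hsub1 : Finset.Ico k (n + 1) ⊆ Finset.range (n + 1) := by
    intro x hx
    simp only [Finset.mem_Ico] at hx
    exact Finset.mem_range.mpr hx.2
  rw [← Finset.sum_subset hsub1 (fun j hj hj' => by
    have hjk : j < k := by
      simp only [Finset.mem_range] at hj
      simp only [Finset.mem_Ico] at hj'
      omega
    have hempty : IsEmpty {U : Submodule F (Fin n → F) // S ≤ U ∧ Module.finrank F U = j} := by
      constructor
      rintro ⟨U, hU, hrk⟩
      have := Submodule.finrank_mono hU
      omega
    rw [Nat.card_of_isEmpty, Nat.cast_zero, zero_mul])]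
  have hsub2 : Finset.Ico k (kzero n d F) ⊆ Finset.Ico k (n + 1) := by
    intro x hx
    simp only [Finset.mem_Ico] at hx ⊢
    omega
  rw [← Finset.sum_subset hsub2 (fun j hj hj' => by
    have hjk : kzero n d F ≤ j := by
      simp only [Finset.mem_Ico] at hj hj'
      omega
    rw [acoef_of_le n ℓ d F j hjk, mul_zero])]
  rw [← acoef_sum n ℓ d F k hS]
  apply Finset.sum_congr rfl
  intro j hj
  have hjk : k ≤ j := (Finset.mem_Ico.mp hj).1
  rw [card_above F n j S hjk]

end Aux

/-- **Exact completeness of the partial Krawtchouk hierarchy at level `n`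
(Theorem 1.3, pseudoprobability form).** For `ℓ ≥ n`, the value `q^k₀` is the
greatest element of the set of objective values `∑_S |S| p S` over all `p`
feasible for the distance-constrained pseudoprobability program at level `ℓ`. -/
theorem partial_kraw_exact_completeness
    (n ℓ d : ℕ) (hn : 1 ≤ n) (hd : 1 ≤ d) (hdn : d ≤ n) (hnl : n ≤ ℓ)
    (F : Type) [Field F] [Fintype F] :
    IsGreatest
      {v : ℝ | ∃ p : Submodule F (Fin n → F) → ℝ, PseudoFeasibleDist n ℓ d F p ∧
        v = ∑ S : Submodule F (Fin n → F), (Fintype.card S : ℝ) * p S}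
      ((Fintype.card F : ℝ) ^ (kzero n d F)) := by
  classical
  obtain ⟨C₀, hC₀good, hC₀rank⟩ := kzero_attained n d F
  constructor
  · -- the value is attained by the indicator of an optimal code
    refine ⟨fun S => if S = C₀ then 1 else 0, ⟨?_, ?_, ?_, ?_⟩, ?_⟩
    · rw [Finset.sum_ite_eq' Finset.univ C₀ (fun _ => (1 : ℝ)),
        if_pos (Finset.mem_univ _)]
    · rintro S ⟨w, hwS, hw0, hwt⟩
      show (if S = C₀ then (1 : ℝ) else 0) = 0
      rw [if_neg]
      intro hSC
      subst hSC
      have := hC₀good w hwS hw0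
      omega
    · intro U
      apply Finset.sum_nonneg
      intro S _
      split_ifs <;> positivity
    · intro U
      apply Finset.sum_nonneg
      intro S _
      split_ifs <;> positivity
    · have : ∀ S : Submodule F (Fin n → F),
          (Fintype.card S : ℝ) * (if S = C₀ then 1 else 0)
            = (if S = C₀ then (Fintype.card S : ℝ) else 0) := by
        intro S
        split_ifs <;> ring
      rw [Finset.sum_congr rfl (fun S _ => this S),
        Finset.sum_ite_eq' Finset.univ C₀ (fun S => (Fintype.card S : ℝ)),
        if_pos (Finset.mem_univ _)]
      rw [show (Fintype.card C₀ : ℕ) = Fintype.card F ^ (kzero n d F) from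
        hC₀rank ▸ Module.card_eq_pow_finrank]
      push_cast
      ring
  · -- upper bound
    rintro v ⟨p, ⟨hsum, hvan, hCc, _hDc⟩, rfl⟩
    set Q : ℝ := (Fintype.card F : ℝ) with hQdef
    set k₀ := kzero n d F with hk₀def
    have ha := acoef_nonneg n ℓ d F hnl
    have key : ∀ S : Submodule F (Fin n → F),
        (Q ^ k₀ - (Fintype.card S : ℝ)) * p S
          = (∑ U : Submodule F (Fin n → F),
              (if S ≤ U then acoef n ℓ d F (Module.finrank F U) else 0))
            * ((Fintype.card S : ℝ) ^ ℓ * p S) := by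
      intro S
      by_cases hp : p S = 0
      · rw [hp]
        ring
      · have hgood : MinDistGe n d F S := by
          by_contra hbad
          apply hp
          apply hvan
          simp only [MinDistGe, not_forall] at hbad
          obtain ⟨w, hwS, hw0, hwt⟩ := hbad
          exact ⟨w, hwS, hw0, by omega⟩
        have hk : Module.finrank F S ≤ k₀ := le_kzero n d F S hgood
        have hcard : (Fintype.card S : ℝ) = Q ^ (Module.finrank F S) := by
          rw [hQdef]
          exact_mod_cast (Module.card_eq_pow_finrank :
            Fintype.card S = Fintype.card F ^ Module.finrank F S)
        rw [asum_eq n ℓ d F S hk, hcard, ← pow_mul]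
        have hQ0 : (0 : ℝ) < Q := by
          rw [hQdef]
          exact_mod_cast Fintype.card_pos
        have hne : Q ^ (ℓ * Module.finrank F S) ≠ 0 := by positivity
        rw [show Module.finrank F S * ℓ = ℓ * Module.finrank F S from Nat.mul_comm _ _]
        field_simp
        ring
    have main : Q ^ k₀ - ∑ S : Submodule F (Fin n → F), (Fintype.card S : ℝ) * p S
        = ∑ U : Submodule F (Fin n → F), acoef n ℓ d F (Module.finrank F U)
            * (∑ S : Submodule F (Fin n → F),
                if S ≤ U then (Fintype.card S : ℝ) ^ ℓ * p S else 0) := by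
      have e1 : ∀ U : Submodule F (Fin n → F),
          acoef n ℓ d F (Module.finrank F U)
            * (∑ S : Submodule F (Fin n → F),
                if S ≤ U then (Fintype.card S : ℝ) ^ ℓ * p S else 0)
          = ∑ S : Submodule F (Fin n → F),
              (if S ≤ U then acoef n ℓ d F (Module.finrank F U)
                  * ((Fintype.card S : ℝ) ^ ℓ * p S) else 0) := by
        intro U
        rw [Finset.mul_sum]
        apply Finset.sum_congr rfl
        intro S _
        rw [mul_ite, mul_zero]
      rw [Finset.sum_congr rfl (fun U _ => e1 U), Finset.sum_comm]
      have e2 : ∀ S : Submodule F (Fin n → F),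
          ∑ U : Submodule F (Fin n → F),
              (if S ≤ U then acoef n ℓ d F (Module.finrank F U)
                  * ((Fintype.card S : ℝ) ^ ℓ * p S) else 0)
            = (∑ U : Submodule F (Fin n → F),
                (if S ≤ U then acoef n ℓ d F (Module.finrank F U) else 0))
              * ((Fintype.card S : ℝ) ^ ℓ * p S) := by
        intro S
        rw [Finset.sum_mul]
        apply Finset.sum_congr rfl
        intro U _
        rw [ite_mul, zero_mul]
      rw [Finset.sum_congr rfl (fun S _ => e2 S)]
      rw [Finset.sum_congr rfl (fun S _ => (key S).symm)]
      rw [show (∑ S : Submodule F (Fin n → F), (Q ^ k₀ - (Fintype.card S : ℝ)) * p S)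
          = Q ^ k₀ * (∑ S : Submodule F (Fin n → F), p S)
            - ∑ S : Submodule F (Fin n → F), (Fintype.card S : ℝ) * p S from by
        rw [Finset.mul_sum, ← Finset.sum_sub_distrib]
        apply Finset.sum_congr rfl
        intro S _
        ring]
      rw [hsum, mul_one]
    have hnonneg : 0 ≤ ∑ U : Submodule F (Fin n → F), acoef n ℓ d F (Module.finrank F U)
        * (∑ S : Submodule F (Fin n → F),
            if S ≤ U then (Fintype.card S : ℝ) ^ ℓ * p S else 0) := by
      apply Finset.sum_nonneg
      intro U _
      exact mul_nonneg (ha _) (hCc U)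
    linarith [main, hnonneg]
end
end
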